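/- Let k be even and n ≥ 0. The number of bw-balanced k-ary words of length n equals (k/2)^n · C(n, ⌊n/2⌋). -/

import Mathlib

/-- Black contribution of letter `h` at (1-based) index `i`. -/
def blackC (i h : ℕ) : ℕ := if Odd i then (h + 1) / 2 else h / 2

/-- White contribution of letter `h` at (1-based) index `i`. -/
def whiteC (i h : ℕ) : ℕ := if Odd i then h / 2 else (h + 1) / 2

/-- Number of black cells in the bargraph of the word `w`. -/
def black {n : ℕ} (w : Fin n → ℕ) : ℕ := ∑ i : Fin n, blackC (i.1 + 1) (w i)

/-- Number of white cells in the bargraph of the word `w`. -/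
def white {n : ℕ} (w : Fin n → ℕ) : ℕ := ∑ i : Fin n, whiteC (i.1 + 1) (w i)

lemma fin2val : ∀ x : Fin 2, x.1 = if x = 1 then 1 else 0 := by decide

lemma binCount (n m : ℕ) :
    (Finset.univ.filter fun ε : Fin n → Fin 2 => (∑ i, (ε i).1) = m).card
      = Nat.choose n m := by
  have hpc := Finset.card_powersetCard m (Finset.univ : Finset (Fin n))
  rw [Finset.card_univ, Fintype.card_fin] at hpc
  rw [← hpc]
  apply Finset.card_nbij' (fun ε => Finset.univ.filter fun i => ε i = 1)
    (fun s => fun i => if i ∈ s then 1 else 0)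
  · intro ε hε
    simp only [Finset.mem_coe, Finset.mem_filter, Finset.mem_univ, true_and] at hε
    rw [Finset.mem_coe, Finset.mem_powersetCard]
    refine ⟨Finset.filter_subset _ _, ?_⟩
    rw [← hε, Finset.card_filter]
    exact Finset.sum_congr rfl fun i _ => (fin2val (ε i)).symm
  · intro s hs
    rw [Finset.mem_coe, Finset.mem_powersetCard] at hs
    simp only [Finset.mem_coe, Finset.mem_filter, Finset.mem_univ, true_and]
    rw [← hs.2]
    have : ∀ i : Fin n, ((if i ∈ s then (1 : Fin 2) else 0)).1
        = if i ∈ s then 1 else 0 := by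
      intro i; by_cases h : i ∈ s <;> simp [h]
    simp only [this]
    simp [Finset.card_filter]
  · intro ε _
    funext i
    have h : ∀ x : Fin 2, (if x = 1 then (1 : Fin 2) else 0) = x := by decide
    simp only [Finset.mem_filter, Finset.mem_univ, true_and]
    exact h (ε i)
  · intro s _
    ext i
    simp only [Finset.mem_filter, Finset.mem_univ, true_and]
    by_cases h : i ∈ s <;> simp [h]

def cc (i h : ℕ) : ℕ := if Even i then (h + 1) % 2 else 1 - (h + 1) % 2

lemma cc_lt (i h : ℕ) : cc i h < 2 := by unfold cc; split <;> omega

lemma pointwise (i h : ℕ) :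
    blackC (i + 1) (h + 1) + (if Odd i then 1 else 0)
      = whiteC (i + 1) (h + 1) + cc i h := by
  rcases Nat.even_or_odd i with hi | hi
  · simp [blackC, whiteC, cc, Nat.odd_add_one, hi, Nat.not_odd_iff_even.mpr hi]
    omega
  · simp [blackC, whiteC, cc, Nat.odd_add_one, hi, Nat.not_even_iff_odd.mpr hi]
    omega

lemma oddCount (n : ℕ) : (∑ i : Fin n, if Odd i.1 then 1 else 0) = n / 2 := by
  induction n with
  | zero => simp
  | succ n ih =>
    rw [Fin.sum_univ_castSucc]
    simp only [Fin.coe_castSucc, Fin.val_last] at *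
    rw [ih]
    rcases Nat.even_or_odd n with hn | hn
    · rw [if_neg (Nat.not_odd_iff_even.mpr hn)]
      obtain ⟨r, hr⟩ := hn; omega
    · rw [if_pos hn]
      obtain ⟨r, hr⟩ := hn; omega

lemma balance_iff {n k : ℕ} (u : Fin n → Fin k) :
    (black (fun i => (u i).1 + 1) = white (fun i => (u i).1 + 1)) ↔
      (∑ i : Fin n, cc i.1 (u i).1) = n / 2 := by
  have hsum : black (fun i => (u i).1 + 1) + n / 2
      = white (fun i => (u i).1 + 1) + ∑ i : Fin n, cc i.1 (u i).1 := by
    unfold black white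
    rw [← oddCount n, ← Finset.sum_add_distrib, ← Finset.sum_add_distrib]
    exact Finset.sum_congr rfl fun i _ => pointwise i.1 (u i).1
  omega

lemma cc_g (i h e : ℕ) (he : e < 2) :
    cc i (2 * h + if Even i then 1 - e else e) = e := by
  by_cases hi : Even i <;> simp [cc, hi] <;> omega

theorem stmt_4 (k n : ℕ) (hk : Even k) :
    (Finset.univ.filter fun u : Fin n → Fin k =>
        black (fun i => (u i).1 + 1) = white (fun i => (u i).1 + 1)).card =
      (k / 2) ^ n * Nat.choose n (n / 2) := by
  have hk2 : k % 2 = 0 := Nat.even_iff.mp hk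
  have hfe : (Finset.univ.filter fun u : Fin n → Fin k =>
      black (fun i => (u i).1 + 1) = white (fun i => (u i).1 + 1))
      = Finset.univ.filter fun u : Fin n → Fin k =>
          (∑ i : Fin n, cc i.1 (u i).1) = n / 2 := by
    ext u; simp [balance_iff u]
  rw [hfe]
  have hdivlt : ∀ (u : Fin n → Fin k) (i : Fin n), (u i).1 / 2 < k / 2 := by
    intro u i; have := (u i).2; omega
  have hglt : ∀ (ε : Fin n → Fin 2) (v : Fin n → Fin (k / 2)) (i : Fin n),
      2 * (v i).1 + (if Even i.1 then 1 - (ε i).1 else (ε i).1) < k := by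
    intro ε v i; have h1 := (v i).2; have h2 := (ε i).2; split <;> omega
  have hcard := Finset.card_nbij'
    (s := Finset.univ.filter fun u : Fin n → Fin k =>
      (∑ i : Fin n, cc i.1 (u i).1) = n / 2)
    (t := (Finset.univ.filter fun ε : Fin n → Fin 2 => (∑ i, (ε i).1) = n / 2) ×ˢ
      (Finset.univ : Finset (Fin n → Fin (k / 2))))
    (fun u => (fun i => ⟨cc i.1 (u i).1, cc_lt _ _⟩, fun i => ⟨(u i).1 / 2, hdivlt u i⟩))
    (fun p => fun i => ⟨2 * (p.2 i).1 + (if Even i.1 then 1 - (p.1 i).1 else (p.1 i).1),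
      hglt p.1 p.2 i⟩)
    (by
      intro u hu
      simp only [Finset.mem_coe, Finset.mem_filter, Finset.mem_univ, true_and] at hu
      simp [Finset.mem_product, hu])
    (by
      intro p hp
      simp only [Finset.mem_coe, Finset.mem_product, Finset.mem_filter, Finset.mem_univ, true_and] at hp
      simp only [Finset.mem_coe, Finset.mem_filter, Finset.mem_univ, true_and]
      rw [← hp.1]
      exact Finset.sum_congr rfl fun i _ => cc_g i.1 (p.2 i).1 (p.1 i).1 (p.1 i).2)
    (by
      intro u _
      funext i
      apply Fin.ext
      show 2 * ((u i).1 / 2) + (if Even i.1 then 1 - cc i.1 (u i).1 else cc i.1 (u i).1)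
        = (u i).1
      by_cases hi : Even i.1 <;> simp [cc, hi] <;> omega)
    (by
      intro p _
      refine Prod.ext ?_ ?_
      · funext i
        exact Fin.ext (cc_g i.1 (p.2 i).1 (p.1 i).1 (p.1 i).2)
      · funext i
        apply Fin.ext
        show (2 * (p.2 i).1 + (if Even i.1 then 1 - (p.1 i).1 else (p.1 i).1)) / 2 = (p.2 i).1
        have := (p.1 i).2
        split <;> omega)
  rw [hcard, Finset.card_product, binCount]
  simp [Finset.card_univ]
  ring
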